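/- Let x ≥ 0 be a real number and let ε ∈ [−1,1] be a real number with x + ε ≥ 0. Then |x·ln(x) − (x+ε)·ln(x+ε)| ≤ 7 + ln(x+1), where the convention 0·ln 0 = 0 is used. -/

import Mathlib

lemma log3_le : Real.log 3 ≤ 7/6 := by
  have h1 := Real.exp_one_gt_d9
  have h2 : (1:ℝ) + 1/6 ≤ Real.exp (1/6) := by
    have := Real.add_one_le_exp (1/6 : ℝ); linarith
  have h3 : Real.exp (7/6) = Real.exp 1 * Real.exp (1/6) := by
    rw [← Real.exp_add]; norm_num
  have : (3:ℝ) ≤ Real.exp (7/6) := by nlinarith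
  exact (Real.log_le_iff_le_exp (by norm_num)).2 this

lemma aux_bound (y : ℝ) (h0 : 0 ≤ y) (h3 : y ≤ 3) : |y * Real.log y| ≤ 7/2 := by
  rcases le_or_gt y 1 with h | h
  · rcases eq_or_lt_of_le h0 with h0' | h0'
    · rw [← h0']; norm_num
    · have hlt := Real.abs_log_mul_self_lt y h0' h
      rw [mul_comm] at hlt
      linarith
  · have hl : 0 ≤ Real.log y := Real.log_nonneg h.le
    rw [abs_of_nonneg (mul_nonneg h0 hl)]
    have hy3 : Real.log y ≤ Real.log 3 := Real.log_le_log (by linarith) h3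
    nlinarith [log3_le]

/-- Let `x ≥ 0` and `ε ∈ [−1,1]` with `x + ε ≥ 0`. Then
`|x·ln(x) − (x+ε)·ln(x+ε)| ≤ 7 + ln(x+1)` (the convention `0·ln 0 = 0` holds
automatically since `Real.log 0 = 0`). -/
theorem stmt10 (x ε : ℝ) (hx : 0 ≤ x) (hε : ε ∈ Set.Icc (-1 : ℝ) 1)
    (hxε : 0 ≤ x + ε) :
    |x * Real.log x - (x + ε) * Real.log (x + ε)| ≤ 7 + Real.log (x + 1) := by
  obtain ⟨he1, he2⟩ := hε
  have hlog1 : 0 ≤ Real.log (x + 1) := Real.log_nonneg (by linarith)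
  rcases le_or_gt x 2 with hx2 | hx2
  · -- small case
    have b1 := aux_bound x hx (by linarith)
    have b2 := aux_bound (x + ε) hxε (by linarith)
    calc |x * Real.log x - (x + ε) * Real.log (x + ε)|
        ≤ |x * Real.log x| + |(x + ε) * Real.log (x + ε)| := abs_sub _ _
      _ ≤ 7 + Real.log (x + 1) := by linarith
  · -- large case
    have hxpos : (0:ℝ) < x := by linarith
    have hb1 : (1:ℝ) ≤ x + ε := by linarith
    have hbpos : (0:ℝ) < x + ε := by linarith
    have hxm1 : (0:ℝ) < x - 1 := by linarith
    -- bound |log x - log (x+ε)| ≤ 1/(x-1)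
    have hub : Real.log x - Real.log (x + ε) ≤ 1 / (x - 1) := by
      have hq : (0:ℝ) < x / (x + ε) := by positivity
      have := Real.log_le_sub_one_of_pos hq
      rw [Real.log_div (ne_of_gt hxpos) (ne_of_gt hbpos)] at this
      have h2 : x / (x + ε) - 1 = -ε / (x + ε) := by field_simp; ring
      rw [h2] at this
      have h3 : -ε / (x + ε) ≤ 1 / (x - 1) := by
        rw [div_le_div_iff₀ hbpos hxm1]
        nlinarith
      linarith
    have hlb : Real.log (x + ε) - Real.log x ≤ 1 / (x - 1) := by
      have hq : (0:ℝ) < (x + ε) / x := by positivity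
      have := Real.log_le_sub_one_of_pos hq
      rw [Real.log_div (ne_of_gt hbpos) (ne_of_gt hxpos)] at this
      have h2 : (x + ε) / x - 1 = ε / x := by field_simp; ring
      rw [h2] at this
      have h3 : ε / x ≤ 1 / (x - 1) := by
        rw [div_le_div_iff₀ hxpos hxm1]
        nlinarith
      linarith
    have habs : |Real.log x - Real.log (x + ε)| ≤ 1 / (x - 1) := by
      rw [abs_le]; constructor <;> linarith
    have key : x * Real.log x - (x + ε) * Real.log (x + ε)
        = x * (Real.log x - Real.log (x + ε)) - ε * Real.log (x + ε) := by ring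
    have hlogb : 0 ≤ Real.log (x + ε) := Real.log_nonneg hb1
    have hlogb2 : Real.log (x + ε) ≤ Real.log (x + 1) :=
      Real.log_le_log (by linarith) (by linarith)
    calc |x * Real.log x - (x + ε) * Real.log (x + ε)|
        ≤ |x * (Real.log x - Real.log (x + ε))| + |ε * Real.log (x + ε)| := by
          rw [key]; exact abs_sub _ _
      _ ≤ x * (1 / (x - 1)) + 1 * Real.log (x + 1) := by
          gcongr ?_ + ?_
          · rw [abs_mul, abs_of_nonneg hx]
            · exact mul_le_mul_of_nonneg_left habs hx
          · rw [abs_mul]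
            exact mul_le_mul (abs_le.2 ⟨he1, he2⟩) (by rw [abs_of_nonneg hlogb]; exact hlogb2) (abs_nonneg _) one_pos.le
      _ ≤ 7 + Real.log (x + 1) := by
          have : x * (1 / (x - 1)) ≤ 2 := by
            rw [mul_one_div, div_le_iff₀ hxm1]; linarith
          linarith
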